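/- Let U and V be positive random variables with U/V ≤ M almost surely for a constant M > 0. Suppose there exists an event D with probability at least 1 − α on which |U − E[U]| ≤ ε·E[U] and |V − E[V]| ≤ ε·E[V] for some 0 ≤ ε < 1. Then E[|U/V − E[U]/E[V]|²] ≤ (4ε²/(1−ε)²)·(E[U]/E[V])² + (max(M, E[U]/E[V]))²·α. -/

import Mathlib

open MeasureTheory

/-- Lemma 1 of the paper: if `U/V ≤ M` a.s. and, on an event `D` of probability at least
`1 - α`, both `U` and `V` are within relative error `ε` of their means, then the mean
squared error of `U/V` around `E[U]/E[V]` is bounded by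
`4ε²/(1-ε)² (E[U]/E[V])² + (max M (E[U]/E[V]))² α`. -/
theorem stmt_0 {Ω : Type*} [MeasurableSpace Ω] (μ : Measure Ω) [IsProbabilityMeasure μ]
    (U V : Ω → ℝ) (M α ε : ℝ) (hM : 0 < M)
    (hU : ∀ ω, 0 < U ω) (hV : ∀ ω, 0 < V ω)
    (hUV : ∀ᵐ ω ∂μ, U ω / V ω ≤ M)
    (hUint : Integrable U μ) (hVint : Integrable V μ)
    (hInt : Integrable (fun ω => |U ω / V ω - (∫ ω, U ω ∂μ) / (∫ ω, V ω ∂μ)| ^ 2) μ)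
    (hε0 : 0 ≤ ε) (hε1 : ε < 1)
    (D : Set Ω) (hDm : MeasurableSet D) (hDα : (1 : ℝ) - α ≤ (μ D).toReal)
    (hDU : ∀ ω ∈ D, |U ω - ∫ ω', U ω' ∂μ| ≤ ε * ∫ ω', U ω' ∂μ)
    (hDV : ∀ ω ∈ D, |V ω - ∫ ω', V ω' ∂μ| ≤ ε * ∫ ω', V ω' ∂μ) :
    ∫ ω, |U ω / V ω - (∫ ω', U ω' ∂μ) / (∫ ω', V ω' ∂μ)| ^ 2 ∂μ ≤
      4 * ε ^ 2 / (1 - ε) ^ 2 * ((∫ ω', U ω' ∂μ) / (∫ ω', V ω' ∂μ)) ^ 2 +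
        (max M ((∫ ω', U ω' ∂μ) / (∫ ω', V ω' ∂μ))) ^ 2 * α := by
  set EU := ∫ ω', U ω' ∂μ with hEUdef
  set EV := ∫ ω', V ω' ∂μ with hEVdef
  have hEU : 0 < EU := by
    rw [hEUdef, integral_pos_iff_support_of_nonneg (fun ω => (hU ω).le) hUint]
    have : Function.support U = Set.univ := Set.eq_univ_of_forall fun ω => (hU ω).ne'
    simp [this]
  have hEV : 0 < EV := by
    rw [hEVdef, integral_pos_iff_support_of_nonneg (fun ω => (hV ω).le) hVint]
    have : Function.support V = Set.univ := Set.eq_univ_of_forall fun ω => (hV ω).ne'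
    simp [this]
  set R := EU / EV with hRdef
  have hR : 0 < R := div_pos hEU hEV
  set f : Ω → ℝ := fun ω => |U ω / V ω - R| ^ 2 with hfdef
  set c₁ : ℝ := 4 * ε ^ 2 / (1 - ε) ^ 2 * R ^ 2 with hc₁def
  set c₂ : ℝ := (max M R) ^ 2 with hc₂def
  have h1ε : (0:ℝ) < 1 - ε := by linarith
  have hc₁0 : 0 ≤ c₁ := by positivity
  have hc₂0 : 0 ≤ c₂ := sq_nonneg _
  -- pointwise bound on D
  have hbD : ∀ ω ∈ D, f ω ≤ c₁ := by
    intro ω hω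
    have hVlb : (1 - ε) * EV ≤ V ω := by
      have := abs_le.1 (hDV ω hω)
      linarith [this.1]
    have hVω := hV ω
    have habs : |U ω / V ω - R| ≤ 2 * ε / (1 - ε) * R := by
      have heq : U ω / V ω - R = (U ω * EV - V ω * EU) / (V ω * EV) := by
        rw [hRdef]
        field_simp
      rw [heq, abs_div, abs_of_pos (mul_pos hVω hEV)]
      have hnum : |U ω * EV - V ω * EU| ≤ 2 * ε * EU * EV := by
        have h1 : U ω * EV - V ω * EU = (U ω - EU) * EV + EU * (EV - V ω) := by ring
        calc |U ω * EV - V ω * EU| ≤ |U ω - EU| * EV + EU * |EV - V ω| := by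
              rw [h1]
              refine (abs_add_le _ _).trans ?_
              rw [abs_mul, abs_mul, abs_of_pos hEV, abs_of_pos hEU]
          _ ≤ (ε * EU) * EV + EU * (ε * EV) := by
              have h2 := hDU ω hω
              have h3 : |EV - V ω| ≤ ε * EV := by rw [abs_sub_comm]; exact hDV ω hω
              have := mul_le_mul_of_nonneg_right h2 hEV.le
              have := mul_le_mul_of_nonneg_left h3 hEU.le
              linarith
          _ = 2 * ε * EU * EV := by ring
      have hden : (1 - ε) * EV * EV ≤ V ω * EV :=
        mul_le_mul_of_nonneg_right hVlb hEV.le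
      calc |U ω * EV - V ω * EU| / (V ω * EV)
          ≤ (2 * ε * EU * EV) / ((1 - ε) * EV * EV) := by
            apply div_le_div₀ (by positivity) hnum (by positivity) hden
        _ = 2 * ε / (1 - ε) * R := by
            rw [hRdef]; field_simp
      done
    calc f ω = |U ω / V ω - R| ^ 2 := rfl
      _ ≤ (2 * ε / (1 - ε) * R) ^ 2 := by
          exact pow_le_pow_left₀ (abs_nonneg _) habs 2
      _ = c₁ := by rw [hc₁def]; field_simp; ring
  -- a.e. global bound
  have hbAll : ∀ᵐ ω ∂μ, f ω ≤ c₂ := by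
    filter_upwards [hUV] with ω hωM
    have h0 : 0 < U ω / V ω := div_pos (hU ω) (hV ω)
    have habs : |U ω / V ω - R| ≤ max M R := by
      rw [abs_sub_le_iff]
      constructor
      · have : U ω / V ω ≤ max M R := le_trans hωM (le_max_left _ _)
        linarith [hR]
      · have : R ≤ max M R := le_max_right _ _
        linarith [h0]
    calc f ω = |U ω / V ω - R| ^ 2 := rfl
      _ ≤ (max M R) ^ 2 := pow_le_pow_left₀ (abs_nonneg _) habs 2
  have hIntf : Integrable f μ := hInt
  have hsplit : ∫ ω, f ω ∂μ = (∫ ω in D, f ω ∂μ) + ∫ ω in Dᶜ, f ω ∂μ :=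
    (integral_add_compl hDm hIntf).symm
  have hDfin : μ D ≠ ⊤ := measure_ne_top μ D
  have hDcfin : μ Dᶜ ≠ ⊤ := measure_ne_top μ Dᶜ
  have hI1 : ∫ ω in D, f ω ∂μ ≤ c₁ * (μ D).toReal := by
    have := setIntegral_mono_on hIntf.integrableOn (integrableOn_const hDfin) hDm hbD
    simpa [mul_comm, Measure.real] using this
  have hI2 : ∫ ω in Dᶜ, f ω ∂μ ≤ c₂ * (μ Dᶜ).toReal := by
    have := integral_mono_ae hIntf.restrict (integrableOn_const hDcfin) (ae_restrict_of_ae hbAll)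
    simpa [mul_comm, Measure.real] using this
  have hcompl : (μ Dᶜ).toReal ≤ α := by
    have hadd : μ D + μ Dᶜ = 1 := by
      rw [measure_add_measure_compl hDm]; simp
    have : (μ D).toReal + (μ Dᶜ).toReal = 1 := by
      rw [← ENNReal.toReal_add hDfin hDcfin, hadd]; simp
    linarith
  have hD1 : (μ D).toReal ≤ 1 := by
    simpa using ENNReal.toReal_mono (by simp) (prob_le_one (μ := μ) (s := D))
  calc ∫ ω, f ω ∂μ = (∫ ω in D, f ω ∂μ) + ∫ ω in Dᶜ, f ω ∂μ := hsplit
    _ ≤ c₁ * (μ D).toReal + c₂ * (μ Dᶜ).toReal := add_le_add hI1 hI2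
    _ ≤ c₁ * 1 + c₂ * α := add_le_add
        (mul_le_mul_of_nonneg_left hD1 hc₁0)
        (mul_le_mul_of_nonneg_left hcompl hc₂0)
    _ = c₁ + c₂ * α := by ring
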